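/- Every finite group isomorphic to a semidirect product A ⋊_φ B, where A and B are finite abelian groups and φ : B → Aut(A) is a group homomorphism, has a basis. -/

import Mathlib

/-- A sequence `b : Fin n → G` of non-identity elements is a *basis* for the group `G`
if every `g ∈ G` is uniquely of the form `b 0 ^ a 0 * ⋯ * b (n-1) ^ a (n-1)`
with `a i ∈ {0, …, orderOf (b i) - 1}`. -/
def IsGroupBasis {G : Type*} [Group G] {n : ℕ} (b : Fin n → G) : Prop :=
  (∀ i, b i ≠ 1) ∧
    Function.Bijective (fun a : ∀ i, Fin (orderOf (b i)) =>
      (List.ofFn fun i => b i ^ ((a i : ℕ))).prod)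

/-- `G` has a basis. -/
def HasGroupBasis (G : Type*) [Group G] : Prop :=
  ∃ (n : ℕ) (b : Fin n → G), IsGroupBasis b

section Aux

/-- Transport a basis along a `MulEquiv`. -/
theorem HasGroupBasis.of_mulEquiv {G H : Type*} [Group G] [Group H] (e : G ≃* H)
    (h : HasGroupBasis H) : HasGroupBasis G := by
  obtain ⟨n, b, hb1, hb2⟩ := h
  refine ⟨n, fun i => e.symm (b i), fun i => by
    simpa using e.symm.injective.ne (hb1 i), ?_⟩
  have hord : ∀ i, orderOf (e.symm (b i)) = orderOf (b i) := fun i =>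
    orderOf_injective e.symm.toMonoidHom e.symm.injective (b i)
  have key : (fun a : ∀ i, Fin (orderOf (e.symm (b i))) =>
      (List.ofFn fun i => (e.symm (b i)) ^ ((a i : ℕ))).prod)
      = e.symm ∘ (fun a : ∀ i, Fin (orderOf (b i)) =>
        (List.ofFn fun i => (b i) ^ ((a i : ℕ))).prod) ∘
      (fun a i => Fin.cast (hord i) (a i)) := by
    funext a
    simp only [Function.comp_apply, Fin.coe_cast]
    rw [map_list_prod e.symm, List.map_ofFn]
    simp [Function.comp_def]
  rw [key]
  exact e.symm.bijective.comp (hb2.comp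
    (Equiv.piCongrRight fun i => finCongr (hord i)).bijective)

lemma zmod_gen_orderOf (N : ℕ) : orderOf (Multiplicative.ofAdd (1 : ZMod N)) = N := by
  rw [orderOf_ofAdd_eq_addOrderOf]
  exact ZMod.addOrderOf_one N

lemma zmod_gen_ne_one {N : ℕ} (hN : 1 < N) : Multiplicative.ofAdd (1 : ZMod N) ≠ 1 := by
  intro h
  have h2 : orderOf (Multiplicative.ofAdd (1 : ZMod N)) = 1 := by rw [h, orderOf_one]
  rw [zmod_gen_orderOf] at h2
  omega

lemma zmod_gen_pow {N : ℕ} [NeZero N] (x : Multiplicative (ZMod N)) :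
    Multiplicative.ofAdd (1 : ZMod N) ^ (Multiplicative.toAdd x).val = x := by
  rw [← ofAdd_nsmul, nsmul_eq_mul, mul_one, ZMod.natCast_val, ZMod.cast_id]
  simp

/-- A finite product of nontrivial cyclic groups `ZMod (n i)` has a basis. -/
theorem hasGroupBasis_pi_zmod {ι : Type} [Fintype ι] (n : ι → ℕ) (hn : ∀ i, 1 < n i) :
    HasGroupBasis (∀ i, Multiplicative (ZMod (n i))) := by
  classical
  haveI : ∀ i, NeZero (n i) := fun i => ⟨by have := hn i; omega⟩
  set k := Fintype.card ι with hk
  set eq : Fin k ≃ ι := (Fintype.equivFin ι).symm with heq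
  set g : ∀ i, Multiplicative (ZMod (n i)) := fun i => Multiplicative.ofAdd (1 : ZMod (n i))
    with hg
  have hgi : ∀ i, g i = Multiplicative.ofAdd (1 : ZMod (n i)) := fun i => rfl
  have hgord : ∀ i, orderOf (g i) = n i := fun i => by rw [hgi]; exact zmod_gen_orderOf (n i)
  have hgne : ∀ i, g i ≠ 1 := fun i => by rw [hgi]; exact zmod_gen_ne_one (hn i)
  set b : Fin k → (∀ i, Multiplicative (ZMod (n i))) :=
    fun j => Pi.mulSingle (eq j) (g (eq j)) with hb
  have hbj : ∀ j, b j = Pi.mulSingle (eq j) (g (eq j)) := fun j => rfl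
  have hord : ∀ j, orderOf (b j) = n (eq j) := by
    intro j
    have hinj : Function.Injective
        ⇑(MonoidHom.mulSingle (fun i => Multiplicative (ZMod (n i))) (eq j)) := by
      intro x y hxy
      have := congrFun hxy (eq j)
      simpa [MonoidHom.mulSingle_apply] using this
    have h2 := orderOf_injective
      (MonoidHom.mulSingle (fun i => Multiplicative (ZMod (n i))) (eq j)) hinj (g (eq j))
    rw [MonoidHom.mulSingle_apply] at h2
    rw [hbj j, h2]
    exact hgord _
  -- key formula for the product map
  have key : ∀ (a : ∀ j, Fin (orderOf (b j))) (j : Fin k),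
      (List.ofFn fun j' => b j' ^ ((a j' : ℕ))).prod (eq j) = g (eq j) ^ ((a j : ℕ)) := by
    intro a j
    rw [List.prod_ofFn, Finset.prod_apply]
    rw [Finset.prod_eq_single j ?_ (by simp)]
    · generalize ((a j : ℕ)) = v
      rw [hbj, Pi.pow_apply, Pi.mulSingle_eq_same]
    · intro j' _ hj'
      generalize ((a j' : ℕ)) = v
      rw [hbj, Pi.pow_apply,
        Pi.mulSingle_eq_of_ne (fun hh => hj' (eq.injective hh).symm), one_pow]
  refine ⟨k, b, fun j => ?_, ?_⟩
  · intro h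
    have := congrFun h (eq j)
    rw [hbj j] at this
    simp only [Pi.mulSingle_eq_same, Pi.one_apply] at this
    exact hgne _ this
  · constructor
    · intro a a' hfa
      funext j
      have hi := congrFun hfa (eq j)
      have hi2 : g (eq j) ^ ((a j : ℕ)) = g (eq j) ^ ((a' j : ℕ)) :=
        (key a j).symm.trans (hi.trans (key a' j))
      have h3 : orderOf (g (eq j)) = orderOf (b j) := by rw [hgord, hord]
      have hval : ((a j : ℕ)) = ((a' j : ℕ)) := by
        refine pow_injOn_Iio_orderOf ?_ ?_ hi2
        · rw [Set.mem_Iio, h3]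
          exact (a j).is_lt
        · rw [Set.mem_Iio, h3]
          exact (a' j).is_lt
      exact Fin.ext hval
    · intro x
      have hlt : ∀ j, ((Multiplicative.toAdd (x (eq j))).val) < orderOf (b j) := by
        intro j
        rw [hord j]
        exact ZMod.val_lt _
      refine ⟨fun j => ⟨((Multiplicative.toAdd (x (eq j))).val), hlt j⟩, ?_⟩
      funext i
      rw [show i = eq (eq.symm i) from (Equiv.apply_symm_apply eq i).symm]
      refine (key (fun j => ⟨((Multiplicative.toAdd (x (eq j))).val), hlt j⟩)
        (eq.symm i)).trans ?_
      exact zmod_gen_pow (x (eq (eq.symm i)))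

/-- Finite abelian groups have a basis. -/
theorem hasGroupBasis_of_comm {A : Type*} [CommGroup A] [Finite A] : HasGroupBasis A := by
  obtain ⟨ι, _, n, hn, ⟨eA⟩⟩ := CommGroup.equiv_prod_multiplicative_zmod_of_finite A
  exact HasGroupBasis.of_mulEquiv eA (hasGroupBasis_pi_zmod n hn)

open SemidirectProduct in
/-- The semidirect product of two groups with bases has a basis. -/
theorem hasGroupBasis_semidirect {A B : Type*} [Group A] [Group B] (φ : B →* MulAut A)
    (hA : HasGroupBasis A) (hB : HasGroupBasis B) : HasGroupBasis (A ⋊[φ] B) := by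
  obtain ⟨m, b, hb1, hb2⟩ := hA
  obtain ⟨k, c, hc1, hc2⟩ := hB
  set d : Fin (m + k) → A ⋊[φ] B :=
    Fin.append (fun i => inl (b i)) (fun j => inr (c j)) with hd
  have hdl : ∀ i : Fin m, d (Fin.castAdd k i) = inl (b i) := fun i => Fin.append_left _ _ i
  have hdr : ∀ j : Fin k, d (Fin.natAdd m j) = inr (c j) := fun j => Fin.append_right _ _ j
  have hordl : ∀ i : Fin m, orderOf (d (Fin.castAdd k i)) = orderOf (b i) := by
    intro i; rw [hdl i]
    exact orderOf_injective inl inl_injective (b i)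
  have hordr : ∀ j : Fin k, orderOf (d (Fin.natAdd m j)) = orderOf (c j) := by
    intro j; rw [hdr j]
    exact orderOf_injective inr inr_injective (c j)
  -- key formula
  have key : ∀ a : ∀ i, Fin (orderOf (d i)),
      (List.ofFn fun i => d i ^ ((a i : ℕ))).prod =
      ⟨(List.ofFn fun i => b i ^ ((a (Fin.castAdd k i) : ℕ))).prod,
       (List.ofFn fun j => c j ^ ((a (Fin.natAdd m j) : ℕ))).prod⟩ := by
    intro a
    rw [List.ofFn_add (f := fun i => d i ^ ((a i : ℕ))), List.prod_append]
    change (List.ofFn fun i : Fin m => d (Fin.castAdd k i) ^ ((a (Fin.castAdd k i) : ℕ))).prod * _ = _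
    have hf1 : (fun i : Fin m => d (Fin.castAdd k i) ^ ((a (Fin.castAdd k i) : ℕ)))
        = fun i => inl (b i ^ ((a (Fin.castAdd k i) : ℕ))) := by
      funext i
      generalize ((a (Fin.castAdd k i) : ℕ)) = v
      rw [hdl i, map_pow]
    have hf2 : (fun j : Fin k => d (Fin.natAdd m j) ^ ((a (Fin.natAdd m j) : ℕ)))
        = fun j => inr (c j ^ ((a (Fin.natAdd m j) : ℕ))) := by
      funext j
      generalize ((a (Fin.natAdd m j) : ℕ)) = v
      rw [hdr j, map_pow]
    have h1 : (List.ofFn fun i : Fin m => d (Fin.castAdd k i) ^ ((a (Fin.castAdd k i) : ℕ))).prod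
        = inl (List.ofFn fun i => b i ^ ((a (Fin.castAdd k i) : ℕ))).prod := by
      rw [hf1, map_list_prod (inl : A →* A ⋊[φ] B), List.map_ofFn]
      exact congrArg List.prod (List.ofFn_inj.mpr rfl)
    have h2 : (List.ofFn fun j : Fin k => d (Fin.natAdd m j) ^ ((a (Fin.natAdd m j) : ℕ))).prod
        = inr (List.ofFn fun j => c j ^ ((a (Fin.natAdd m j) : ℕ))).prod := by
      rw [hf2, map_list_prod (inr : B →* A ⋊[φ] B), List.map_ofFn]
      exact congrArg List.prod (List.ofFn_inj.mpr rfl)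
    rw [h1, h2, ← mk_eq_inl_mul_inr]
  refine ⟨m + k, d, ?_, ?_⟩
  · intro i
    refine Fin.addCases (fun i hone => ?_) (fun j hone => ?_) i
    · rw [hdl i] at hone
      exact hb1 i (inl_injective (by simpa using hone))
    · rw [hdr j] at hone
      exact hc1 j (inr_injective (by simpa using hone))
  · constructor
    · intro a a' hfa
      have hfa2 := (key a).symm.trans (hfa.trans (key a'))
      rw [SemidirectProduct.ext_iff] at hfa2
      have hleft : (fun i => Fin.cast (hordl i) (a (Fin.castAdd k i)))
          = (fun i => Fin.cast (hordl i) (a' (Fin.castAdd k i))) :=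
        hb2.1 (by simpa using hfa2.1)
      have hright : (fun j => Fin.cast (hordr j) (a (Fin.natAdd m j)))
          = (fun j => Fin.cast (hordr j) (a' (Fin.natAdd m j))) :=
        hc2.1 (by simpa using hfa2.2)
      funext i
      refine Fin.addCases (motive := fun i => a i = a' i) (fun i => ?_) (fun j => ?_) i
      · have := congrFun hleft i
        exact Fin.ext (by simpa using congrArg Fin.val this)
      · have := congrFun hright j
        exact Fin.ext (by simpa using congrArg Fin.val this)
    · intro x
      obtain ⟨u, hu⟩ := hb2.2 x.left
      obtain ⟨v, hv⟩ := hc2.2 x.right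
      set av : ∀ i : Fin (m + k), Fin (orderOf (d i)) :=
        Fin.addCases (motive := fun i => Fin (orderOf (d i)))
          (fun i => Fin.cast (hordl i).symm (u i))
          (fun j => Fin.cast (hordr j).symm (v j)) with hav
      have havl : ∀ i : Fin m, ((av (Fin.castAdd k i)) : ℕ) = ((u i : ℕ)) := by
        intro i
        rw [hav]
        rw [Fin.addCases_left, Fin.coe_cast]
      have havr : ∀ j : Fin k, ((av (Fin.natAdd m j)) : ℕ) = ((v j : ℕ)) := by
        intro j
        rw [hav]
        rw [Fin.addCases_right, Fin.coe_cast]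
      refine ⟨av, ?_⟩
      refine (key av).trans ?_
      have hu' : (List.ofFn fun i : Fin m => b i ^ ((av (Fin.castAdd k i) : ℕ))).prod
          = x.left := by
        refine Eq.trans (congrArg List.prod (List.ofFn_inj.mpr (funext fun i => ?_))) hu
        rw [havl i]
      have hv' : (List.ofFn fun j : Fin k => c j ^ ((av (Fin.natAdd m j) : ℕ))).prod
          = x.right := by
        refine Eq.trans (congrArg List.prod (List.ofFn_inj.mpr (funext fun j => ?_))) hv
        rw [havr j]
      rw [hu', hv']

end Aux

/-- Every finite group isomorphic to a semidirect product `A ⋊[φ] B` of finite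
abelian groups `A` and `B` has a basis. -/
theorem hasGroupBasis_of_mulEquiv_semidirectProduct
    {A B G : Type*} [CommGroup A] [CommGroup B] [Finite A] [Finite B] [Group G]
    (φ : B →* MulAut A) (e : G ≃* A ⋊[φ] B) :
    HasGroupBasis G := by
  exact HasGroupBasis.of_mulEquiv e
    (hasGroupBasis_semidirect φ hasGroupBasis_of_comm hasGroupBasis_of_comm)
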